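/- For λ > −1 and t ∈ ℝ, the first moment of the generalised decic Freud weight satisfies ∫_{−∞}^{∞} |x|^{2λ+1} exp(−x^{10} + t x²) dx = ∫_0^{∞} s^{λ} exp(−s⁵ + t s) ds =: μ₀(t;λ); the function μ₀(·;λ) satisfies the fifth-order linear differential equation d⁵μ₀/dt⁵ − (t/5) dμ₀/dt − ((λ+1)/5) μ₀ = 0 on ℝ; and the first recurrence coefficient β₁(t;λ) = (dμ₀/dt)/μ₀ satisfies the fourth-order nonlinear equation β₁'''' + 5 β₁ β₁''' + 10(β₁' + β₁²) β₁'' + 15 β₁ (β₁')² + 10 β₁³ β₁' + β₁⁵ − (t/5) β₁ = (λ+1)/5 for all t ∈ ℝ, where primes denote differentiation with respect to t. -/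

import Mathlib

open MeasureTheory Set Real Filter Asymptotics Topology

lemma decic_isBigO (c t : ℝ) :
    (fun s : ℝ => s ^ c * Real.exp (-s ^ 5 + t * s)) =O[atTop]
      fun s => Real.exp (-(1/2) * s) := by
  have h1 : (fun s : ℝ => s ^ c * Real.exp (-s ^ 5 + t * s)) =O[atTop]
      fun s : ℝ => s ^ c * Real.exp (-(1/2) * s ^ (5:ℝ)) := by
    apply IsBigO.of_bound 1
    filter_upwards [eventually_ge_atTop (1 + 2 * |t|)] with s hs
    have hs1 : (1:ℝ) ≤ s := by
      have := abs_nonneg t; linarith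
    have hs0 : (0:ℝ) < s := by linarith
    rw [one_mul, norm_mul, norm_mul]
    apply mul_le_mul_of_nonneg_left _ (norm_nonneg _)
    rw [Real.norm_eq_abs, Real.norm_eq_abs, abs_of_pos (Real.exp_pos _),
      abs_of_pos (Real.exp_pos _), Real.exp_le_exp]
    have h5 : s ^ (5:ℝ) = s ^ (5:ℕ) := by
      rw [← Real.rpow_natCast s 5]; norm_num
    rw [h5]
    nlinarith [abs_nonneg t, le_self_pow₀ hs1 (by norm_num : 4 ≠ 0),
      mul_le_mul_of_nonneg_left (le_abs_self t) hs0.le, hs0.le]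
  exact h1.trans (rpow_mul_exp_neg_mul_rpow_isLittleO_exp_neg c (by norm_num)
    (by norm_num : (0:ℝ) < 1/2)).isBigO

lemma decic_integrable {c : ℝ} (hc : -1 < c) (t : ℝ) :
    IntegrableOn (fun s : ℝ => s ^ c * Real.exp (-s ^ 5 + t * s)) (Ioi 0) := by
  rw [← Ioc_union_Ioi_eq_Ioi (zero_le_one (α := ℝ)), integrableOn_union]
  constructor
  · rw [← integrableOn_Icc_iff_integrableOn_Ioc]
    refine IntegrableOn.mul_continuousOn ?_ ?_ isCompact_Icc
    · exact (intervalIntegrable_iff_integrableOn_Icc_of_le zero_le_one).mp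
        (intervalIntegral.intervalIntegrable_rpow' hc)
    · exact (Real.continuous_exp.comp (by continuity)).continuousOn
  · refine integrable_of_isBigO_exp_neg (by norm_num : (0:ℝ) < 1/2) ?_ (decic_isBigO c t)
    refine ContinuousOn.mul ?_ ?_
    · intro x hx
      exact (Real.continuousAt_rpow_const x c (Or.inl (by
        have : (1:ℝ) ≤ x := hx; positivity))).continuousWithinAt
    · exact (Real.continuous_exp.comp (by continuity)).continuousOn

noncomputable def decicE (c t : ℝ) : ℝ := ∫ s in Ioi (0:ℝ), s ^ c * Real.exp (-s ^ 5 + t * s)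

lemma decic_meas (c t : ℝ) :
    AEStronglyMeasurable (fun s : ℝ => s ^ c * Real.exp (-s ^ 5 + t * s))
      (volume.restrict (Ioi 0)) := by
  apply Measurable.aestronglyMeasurable
  exact (measurable_id.pow_const c).mul
    (((measurable_id.pow_const 5).neg.add (measurable_id.const_mul t)).exp)

lemma decicE_hasDerivAt {c : ℝ} (hc : -1 < c) (t : ℝ) :
    HasDerivAt (decicE c) (decicE (c + 1) t) t := by
  have key := hasDerivAt_integral_of_dominated_loc_of_deriv_le
    (F := fun x (s : ℝ) => s ^ c * Real.exp (-s ^ 5 + x * s))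
    (F' := fun x (s : ℝ) => s ^ (c + 1) * Real.exp (-s ^ 5 + x * s))
    (μ := volume.restrict (Ioi 0)) (x₀ := t)
    (bound := fun s => s ^ (c + 1) * Real.exp (-s ^ 5 + (|t| + 1) * s))
    (Metric.ball_mem_nhds t one_pos) (Eventually.of_forall fun x => decic_meas c x)
    (decic_integrable hc t) (decic_meas (c + 1) t) ?_ (decic_integrable (by linarith) (|t| + 1)) ?_
  · exact key.2
  · rw [ae_restrict_iff' measurableSet_Ioi]
    refine Eventually.of_forall fun s hs x hx => ?_
    have hs0 : (0:ℝ) < s := hs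
    have hx1 : x ≤ |t| + 1 := by
      have := mem_ball_iff_norm.mp hx
      have := abs_lt.mp (by simpa [Real.norm_eq_abs] using this)
      have := le_abs_self t
      linarith
    rw [Real.norm_eq_abs, abs_mul, abs_of_nonneg (Real.rpow_nonneg hs0.le _),
      abs_of_pos (Real.exp_pos _)]
    apply mul_le_mul_of_nonneg_left _ (Real.rpow_nonneg hs0.le _)
    rw [Real.exp_le_exp]
    nlinarith
  · rw [ae_restrict_iff' measurableSet_Ioi]
    refine Eventually.of_forall fun s hs x _ => ?_
    have hs0 : (0:ℝ) < s := hs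
    have h : HasDerivAt (fun x : ℝ => -s ^ 5 + x * s) s x := by
      simpa using (hasDerivAt_mul_const s).const_add (-s ^ 5)
    have h2 := (h.exp).const_mul (s ^ c)
    refine HasDerivAt.congr_deriv h2 (Eq.symm ?_)
    show s ^ (c + 1) * Real.exp (-s ^ 5 + x * s) = _
    rw [Real.rpow_add_one hs0.ne']
    ring

lemma decicE_pos {c : ℝ} (hc : -1 < c) (t : ℝ) : 0 < decicE c t := by
  rw [decicE, setIntegral_pos_iff_support_of_nonneg_ae]
  · have hsub : Ioi (0:ℝ) ⊆ Function.support (fun s : ℝ => s ^ c * Real.exp (-s ^ 5 + t * s))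
        ∩ Ioi 0 := by
      intro s hs
      have hs0 : (0:ℝ) < s := hs
      refine ⟨?_, hs⟩
      simp only [Function.mem_support]
      positivity
    refine lt_of_lt_of_le ?_ (measure_mono (μ := (volume : Measure ℝ)) hsub)
    simp [Real.volume_Ioi]
  · filter_upwards [ae_restrict_mem measurableSet_Ioi] with s hs
    have hs0 : (0:ℝ) < s := hs
    positivity
  · exact decic_integrable hc t

lemma decicE_ibp {c : ℝ} (hc : -1 < c) (t : ℝ) :
    5 * decicE (c + 5) t = t * decicE (c + 1) t + (c + 1) * decicE c t := by
  set E : ℝ → ℝ := fun s => Real.exp (-s ^ 5 + t * s) with hE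
  have key : ∫ s in Ioi (0:ℝ),
      ((c + 1) * (s ^ c * E s) + (t * (s ^ (c + 1) * E s) - 5 * (s ^ (c + 5) * E s))) = 0 := by
    have hderiv : ∀ s ∈ Ioi (0:ℝ), HasDerivAt (fun s => s ^ (c + 1) * E s)
        ((c + 1) * (s ^ c * E s) + (t * (s ^ (c + 1) * E s) - 5 * (s ^ (c + 5) * E s))) s := by
      intro s hs
      have hs0 : (0:ℝ) < s := hs
      have h1 : HasDerivAt (fun s : ℝ => s ^ (c + 1)) ((c + 1) * s ^ c) s := by
        simpa using Real.hasDerivAt_rpow_const (p := c + 1) (Or.inl hs0.ne')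
      have h2 : HasDerivAt (fun s : ℝ => -s ^ 5 + t * s) (-(5 * s ^ 4) + t) s := by
        exact (((hasDerivAt_pow 5 s).neg).add ((hasDerivAt_id s).const_mul t)).congr_deriv (by norm_num)
      have h3 := h1.mul h2.exp
      refine HasDerivAt.congr_deriv h3 (Eq.symm ?_)
      have h4 : s ^ (c + 1) * s ^ (4:ℕ) = s ^ (c + 5) := by
        rw [← Real.rpow_natCast s 4, ← Real.rpow_add hs0]
        congr 1; ring
      rw [hE]
      push_cast at h4 ⊢
      linear_combination 5 * Real.exp (-s ^ 5 + t * s) * h4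
    have f'int : IntegrableOn (fun s : ℝ =>
        (c + 1) * (s ^ c * E s) + (t * (s ^ (c + 1) * E s) - 5 * (s ^ (c + 5) * E s)))
        (Ioi 0) := by
      exact ((decic_integrable hc t).const_mul _).add
        (((decic_integrable (by linarith) t).const_mul t).sub
          ((decic_integrable (by linarith) t).const_mul 5))
    have hcont : ContinuousWithinAt (fun s : ℝ => s ^ (c + 1) * E s) (Ici 0) 0 := by
      apply ContinuousWithinAt.mul
      · exact (Real.continuousAt_rpow_const 0 (c + 1) (Or.inr (by linarith))).continuousWithinAt
      · exact ((Real.continuous_exp.comp (by continuity)).continuousAt).continuousWithinAt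
    have hf : Tendsto (fun s : ℝ => s ^ (c + 1) * E s) atTop (𝓝 0) := by
      have h0 : Tendsto (fun s : ℝ => Real.exp (-(1/2) * s)) atTop (𝓝 0) := by
        have h1 : Tendsto (fun x : ℝ => (1/2) * x) atTop atTop :=
          tendsto_id.const_mul_atTop (by norm_num)
        have h2 := Real.tendsto_exp_neg_atTop_nhds_zero.comp h1
        exact Tendsto.congr (fun x => by simp [Function.comp_apply, neg_mul]) h2
      exact (decic_isBigO (c + 1) t).trans_tendsto h0
    have := integral_Ioi_of_hasDerivAt_of_tendsto hcont hderiv f'int hf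
    rw [this, Real.zero_rpow (by linarith : c + 1 ≠ 0), zero_mul, sub_zero]
  have hA : IntegrableOn (fun s : ℝ => (c + 1) * (s ^ c * E s)) (Ioi 0) := by
    rw [hE]; exact (decic_integrable hc t).const_mul _
  have hB : IntegrableOn (fun s : ℝ => t * (s ^ (c + 1) * E s)) (Ioi 0) := by
    rw [hE]; exact (decic_integrable (by linarith) t).const_mul _
  have hC : IntegrableOn (fun s : ℝ => 5 * (s ^ (c + 5) * E s)) (Ioi 0) := by
    rw [hE]; exact (decic_integrable (by linarith) t).const_mul _
  have hBC : IntegrableOn (fun s : ℝ =>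
      t * (s ^ (c + 1) * E s) - 5 * (s ^ (c + 5) * E s)) (Ioi 0) := by exact hB.sub hC
  rw [integral_add hA hBC, integral_sub hB hC,
    integral_const_mul, integral_const_mul, integral_const_mul] at key
  simp only [hE] at key
  simp only [decicE]
  linarith [key]

lemma decic_moment {l : ℝ} (t : ℝ) :
    (∫ x : ℝ, |x| ^ (2 * l + 1) * Real.exp (-x ^ 10 + t * x ^ 2)) = decicE l t := by
  have h1 : (∫ x : ℝ, |x| ^ (2 * l + 1) * Real.exp (-x ^ 10 + t * x ^ 2))
      = ∫ x : ℝ, (fun y : ℝ => y ^ (2 * l + 1) * Real.exp (-y ^ 10 + t * y ^ 2)) |x| := by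
    congr 1
    funext x
    have h10 : |x| ^ (10:ℕ) = x ^ 10 := by
      rw [← abs_pow, abs_of_nonneg (by positivity)]
    have h2 : |x| ^ (2:ℕ) = x ^ 2 := sq_abs x
    simp only [h10, h2]
  rw [h1, integral_comp_abs (f := fun y : ℝ => y ^ (2 * l + 1) * Real.exp (-y ^ 10 + t * y ^ 2))]
  have h2 := integral_comp_rpow_Ioi (fun s : ℝ => s ^ l * Real.exp (-s ^ 5 + t * s))
    (p := 2) two_ne_zero
  have h3 : ∀ x ∈ Ioi (0:ℝ), (|(2:ℝ)| * x ^ ((2:ℝ) - 1)) •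
      ((fun s : ℝ => s ^ l * Real.exp (-s ^ 5 + t * s)) (x ^ (2:ℝ)))
      = 2 * (x ^ (2 * l + 1) * Real.exp (-x ^ 10 + t * x ^ 2)) := by
    intro x hx
    have hx0 : (0:ℝ) < x := hx
    have e2 : x ^ (2:ℝ) = x ^ (2:ℕ) := by
      rw [show (2:ℝ) = ((2:ℕ):ℝ) by norm_num, Real.rpow_natCast]
    have eA : (x ^ (2:ℝ)) ^ l = x ^ (2 * l) := (Real.rpow_mul hx0.le 2 l).symm
    have eB : x ^ (2 * l + 1) = x ^ (2 * l) * x := by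
      rw [Real.rpow_add hx0, Real.rpow_one]
    have eC : (x ^ (2:ℕ)) ^ (5:ℕ) = x ^ (10:ℕ) := by rw [← pow_mul]
    rw [smul_eq_mul]
    simp only [eA]
    simp only [e2, eC]
    rw [show ((2:ℝ) - 1) = 1 by norm_num, Real.rpow_one, eB, abs_of_pos (by norm_num : (0:ℝ) < 2)]
    ring
  rw [setIntegral_congr_fun measurableSet_Ioi h3, integral_const_mul] at h2
  rw [decicE, ← h2]

lemma iteratedDeriv_decicE {c : ℝ} (hc : -1 < c) (n : ℕ) :
    iteratedDeriv n (decicE c) = decicE (c + n) := by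
  induction n generalizing c with
  | zero => simp
  | succ n ih =>
    rw [iteratedDeriv_succ']
    have hd : deriv (decicE c) = decicE (c + 1) :=
      funext fun x => (decicE_hasDerivAt hc x).deriv
    rw [hd, show c + ((n:ℕ)+1:ℕ) = (c + 1) + (n:ℕ) by push_cast; ring]
    exact ih (by linarith)

theorem decic_freud_moment_and_beta_one (l : ℝ) (hl : -1 < l)
    (μ₀ β₁ : ℝ → ℝ)
    (hμ₀ : ∀ t : ℝ, μ₀ t = ∫ s in Set.Ioi (0 : ℝ), s ^ l * Real.exp (-s ^ 5 + t * s))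
    (hβ₁ : ∀ t : ℝ, β₁ t = deriv μ₀ t / μ₀ t) :
    (∀ t : ℝ, (∫ x : ℝ, |x| ^ (2 * l + 1) * Real.exp (-x ^ 10 + t * x ^ 2)) = μ₀ t) ∧
    (∀ t : ℝ, iteratedDeriv 5 μ₀ t - t / 5 * deriv μ₀ t - (l + 1) / 5 * μ₀ t = 0) ∧
    (∀ t : ℝ, iteratedDeriv 4 β₁ t + 5 * β₁ t * iteratedDeriv 3 β₁ t
        + 10 * (deriv β₁ t + (β₁ t) ^ 2) * iteratedDeriv 2 β₁ t
        + 15 * β₁ t * (deriv β₁ t) ^ 2 + 10 * (β₁ t) ^ 3 * deriv β₁ t + (β₁ t) ^ 5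
        - t / 5 * β₁ t = (l + 1) / 5) := by
  have hμ : μ₀ = decicE l := funext hμ₀
  have hd0 : ∀ x : ℝ, HasDerivAt (decicE l) (decicE (l+1) x) x :=
    fun x => decicE_hasDerivAt hl x
  have hd1 : ∀ x : ℝ, HasDerivAt (decicE (l+1)) (decicE (l+2) x) x := by
    intro x
    have h := decicE_hasDerivAt (show (-1:ℝ) < l + 1 by linarith) x
    rwa [show l + 1 + 1 = l + 2 by ring] at h
  have hd2 : ∀ x : ℝ, HasDerivAt (decicE (l+2)) (decicE (l+3) x) x := by
    intro x
    have h := decicE_hasDerivAt (show (-1:ℝ) < l + 2 by linarith) x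
    rwa [show l + 2 + 1 = l + 3 by ring] at h
  have hd3 : ∀ x : ℝ, HasDerivAt (decicE (l+3)) (decicE (l+4) x) x := by
    intro x
    have h := decicE_hasDerivAt (show (-1:ℝ) < l + 3 by linarith) x
    rwa [show l + 3 + 1 = l + 4 by ring] at h
  have hd4 : ∀ x : ℝ, HasDerivAt (decicE (l+4)) (decicE (l+5) x) x := by
    intro x
    have h := decicE_hasDerivAt (show (-1:ℝ) < l + 4 by linarith) x
    rwa [show l + 4 + 1 = l + 5 by ring] at h
  have hder : deriv (decicE l) = decicE (l+1) := funext fun x => (hd0 x).deriv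
  refine ⟨fun t => (decic_moment t).trans (congrFun hμ t).symm, ?_, ?_⟩
  · intro t
    rw [hμ, iteratedDeriv_decicE hl, hder]
    have hibp := decicE_ibp hl t
    push_cast
    linarith
  · intro t
    have hβf : β₁ = fun y => decicE (l+1) y / decicE l y := by
      funext x
      rw [hβ₁ x, hμ, hder]
    have HB0 : ∀ x : ℝ, HasDerivAt (fun y : ℝ => (decicE (l+1) y) / (decicE l y))
        ((decicE l x * decicE (l+2) x + (-1) * (decicE (l+1) x ^ 2)) / decicE l x ^ 2) x := by
      intro x
      have h := HasDerivAt.fun_div ((hd1 x)) (hd0 x) (decicE_pos hl x).ne'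
      refine HasDerivAt.congr_deriv h (Eq.symm ?_)
      have h0 := (decicE_pos hl x).ne'
      field_simp
      ring
    have HB1 : ∀ x : ℝ, HasDerivAt (fun y : ℝ => (decicE l y * decicE (l+2) y + (-1) * (decicE (l+1) y ^ 2)) / (decicE l y ^ 2))
        ((decicE l x ^ 2 * decicE (l+3) x + (-3) * (decicE l x * decicE (l+1) x * decicE (l+2) x) + (2) * (decicE (l+1) x ^ 3)) / decicE l x ^ 3) x := by
      intro x
      have h := HasDerivAt.fun_div ((((hd0 x).mul (hd2 x)).add (((hd1 x).pow 2).const_mul (-1)))) ((hd0 x).pow 2) (pow_ne_zero 2 (decicE_pos hl x).ne')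
      refine HasDerivAt.congr_deriv h (Eq.symm ?_)
      simp only [Pi.add_apply, Pi.mul_apply, Pi.pow_apply]
      have h0 := (decicE_pos hl x).ne'
      field_simp
      ring
    have HB2 : ∀ x : ℝ, HasDerivAt (fun y : ℝ => (decicE l y ^ 2 * decicE (l+3) y + (-3) * (decicE l y * decicE (l+1) y * decicE (l+2) y) + (2) * (decicE (l+1) y ^ 3)) / (decicE l y ^ 3))
        ((decicE l x ^ 3 * decicE (l+4) x + (-4) * (decicE l x ^ 2 * decicE (l+1) x * decicE (l+3) x) + (-3) * (decicE l x ^ 2 * decicE (l+2) x ^ 2) + (12) * (decicE l x * decicE (l+1) x ^ 2 * decicE (l+2) x) + (-6) * (decicE (l+1) x ^ 4)) / decicE l x ^ 4) x := by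
      intro x
      have h := HasDerivAt.fun_div ((((((hd0 x).pow 2).mul (hd3 x)).add ((((hd0 x).mul (hd1 x)).mul (hd2 x)).const_mul (-3))).add (((hd1 x).pow 3).const_mul (2)))) ((hd0 x).pow 3) (pow_ne_zero 3 (decicE_pos hl x).ne')
      refine HasDerivAt.congr_deriv h (Eq.symm ?_)
      simp only [Pi.add_apply, Pi.mul_apply, Pi.pow_apply]
      have h0 := (decicE_pos hl x).ne'
      field_simp
      ring
    have HB3 : ∀ x : ℝ, HasDerivAt (fun y : ℝ => (decicE l y ^ 3 * decicE (l+4) y + (-4) * (decicE l y ^ 2 * decicE (l+1) y * decicE (l+3) y) + (-3) * (decicE l y ^ 2 * decicE (l+2) y ^ 2) + (12) * (decicE l y * decicE (l+1) y ^ 2 * decicE (l+2) y) + (-6) * (decicE (l+1) y ^ 4)) / (decicE l y ^ 4))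
        ((decicE l x ^ 4 * decicE (l+5) x + (-5) * (decicE l x ^ 3 * decicE (l+1) x * decicE (l+4) x) + (-10) * (decicE l x ^ 3 * decicE (l+2) x * decicE (l+3) x) + (20) * (decicE l x ^ 2 * decicE (l+1) x ^ 2 * decicE (l+3) x) + (30) * (decicE l x ^ 2 * decicE (l+1) x * decicE (l+2) x ^ 2) + (-60) * (decicE l x * decicE (l+1) x ^ 3 * decicE (l+2) x) + (24) * (decicE (l+1) x ^ 5)) / decicE l x ^ 5) x := by
      intro x
      have h := HasDerivAt.fun_div ((((((((hd0 x).pow 3).mul (hd4 x)).add (((((hd0 x).pow 2).mul (hd1 x)).mul (hd3 x)).const_mul (-4))).add ((((hd0 x).pow 2).mul ((hd2 x).pow 2)).const_mul (-3))).add ((((hd0 x).mul ((hd1 x).pow 2)).mul (hd2 x)).const_mul (12))).add (((hd1 x).pow 4).const_mul (-6)))) ((hd0 x).pow 4) (pow_ne_zero 4 (decicE_pos hl x).ne')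
      refine HasDerivAt.congr_deriv h (Eq.symm ?_)
      simp only [Pi.add_apply, Pi.mul_apply, Pi.pow_apply]
      have h0 := (decicE_pos hl x).ne'
      field_simp
      ring
    have hD1 : deriv β₁ = fun x => (decicE l x * decicE (l+2) x + (-1) * (decicE (l+1) x ^ 2)) / decicE l x ^ 2 := by
      rw [hβf]
      exact funext fun x => (HB0 x).deriv
    have hD2 : iteratedDeriv 2 β₁ = fun x => (decicE l x ^ 2 * decicE (l+3) x + (-3) * (decicE l x * decicE (l+1) x * decicE (l+2) x) + (2) * (decicE (l+1) x ^ 3)) / decicE l x ^ 3 := by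
      rw [iteratedDeriv_succ, iteratedDeriv_one, hD1]
      exact funext fun x => (HB1 x).deriv
    have hD3 : iteratedDeriv 3 β₁ = fun x => (decicE l x ^ 3 * decicE (l+4) x + (-4) * (decicE l x ^ 2 * decicE (l+1) x * decicE (l+3) x) + (-3) * (decicE l x ^ 2 * decicE (l+2) x ^ 2) + (12) * (decicE l x * decicE (l+1) x ^ 2 * decicE (l+2) x) + (-6) * (decicE (l+1) x ^ 4)) / decicE l x ^ 4 := by
      rw [iteratedDeriv_succ, hD2]
      exact funext fun x => (HB2 x).deriv
    have hD4 : iteratedDeriv 4 β₁ = fun x => (decicE l x ^ 4 * decicE (l+5) x + (-5) * (decicE l x ^ 3 * decicE (l+1) x * decicE (l+4) x) + (-10) * (decicE l x ^ 3 * decicE (l+2) x * decicE (l+3) x) + (20) * (decicE l x ^ 2 * decicE (l+1) x ^ 2 * decicE (l+3) x) + (30) * (decicE l x ^ 2 * decicE (l+1) x * decicE (l+2) x ^ 2) + (-60) * (decicE l x * decicE (l+1) x ^ 3 * decicE (l+2) x) + (24) * (decicE (l+1) x ^ 5)) / decicE l x ^ 5 := by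
      rw [iteratedDeriv_succ, hD3]
      exact funext fun x => (HB3 x).deriv
    simp only [hD4]
    simp only [hD3]
    simp only [hD2]
    simp only [hD1]
    simp only [hβf]
    have hR := decicE_ibp hl t
    have ha5 : decicE (l+5) t = (t * decicE (l+1) t + (l+1) * decicE l t) / 5 := by
      linarith
    rw [ha5]
    have h0 := (decicE_pos hl t).ne'
    field_simp
    ring
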